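/- Let R : ℝ → ℝ be differentiable and define new coordinates by τ + s = R(t+x) and τ - s = R(t-x). For any twice continuously differentiable function U(s,τ), the function u(x,t) = U(s(x,t), τ(x,t)) satisfies ∂²u/∂x² - ∂²u/∂t² = R'(t-x)·R'(t+x)·(∂²U/∂s² - ∂²U/∂τ²) evaluated at (s(x,t), τ(x,t)). -/

import Mathlib

lemma key_comp (F : ℝ × ℝ → ℝ) (hF : ContDiff ℝ 2 F) (γ γ' : ℝ → ℝ × ℝ) (x : ℝ)
    (γ'' : ℝ × ℝ) (hγ : ∀ y, HasDerivAt γ (γ' y) y) (hγ' : HasDerivAt γ' γ'' x) :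
    deriv (fun y => deriv (fun z => F (γ z)) y) x
      = fderiv ℝ (fderiv ℝ F) (γ x) (γ' x) (γ' x) + fderiv ℝ F (γ x) γ'' := by
  have h1 : ∀ y, deriv (fun z => F (γ z)) y = fderiv ℝ F (γ y) (γ' y) := fun y =>
    (((hF.differentiable (by norm_num)) (γ y)).hasFDerivAt.comp_hasDerivAt y (hγ y)).deriv
  have hdF : Differentiable ℝ (fderiv ℝ F) :=
    (hF.fderiv_right (m := 1) (by norm_num)).differentiable (by norm_num)
  have hc : HasDerivAt (fun y => fderiv ℝ F (γ y)) (fderiv ℝ (fderiv ℝ F) (γ x) (γ' x)) x :=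
    (hdF (γ x)).hasFDerivAt.comp_hasDerivAt x (hγ x)
  have h2 := hc.clm_apply hγ'
  have h3 : (fun y => deriv (fun z => F (γ z)) y) = fun y => fderiv ℝ F (γ y) (γ' y) :=
    funext h1
  rw [h3]
  exact h2.deriv

lemma bilin_expand (H : ℝ × ℝ →L[ℝ] ℝ × ℝ →L[ℝ] ℝ) (a b : ℝ) :
    H (a, b) (a, b) = a * a * H (1, 0) (1, 0) + a * b * H (1, 0) (0, 1)
      + b * a * H (0, 1) (1, 0) + b * b * H (0, 1) (0, 1) := by
  have e : ((a, b) : ℝ × ℝ) = a • ((1 : ℝ), (0 : ℝ)) + b • ((0 : ℝ), (1 : ℝ)) := by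
    simp [Prod.ext_iff]
  rw [e]
  simp only [map_add, map_smul, ContinuousLinearMap.add_apply,
    ContinuousLinearMap.smul_apply, smul_eq_mul]
  ring

theorem conformal_wave_operator (R : ℝ → ℝ) (hR : ContDiff ℝ 2 R)
    (U : ℝ → ℝ → ℝ) (hU : ContDiff ℝ 2 (fun p : ℝ × ℝ => U p.1 p.2)) (x t : ℝ) :
    deriv (fun x' => deriv (fun x'' =>
        U ((R (t + x'') - R (t - x'')) / 2) ((R (t + x'') + R (t - x'')) / 2)) x') x -
    deriv (fun t' => deriv (fun t'' =>
        U ((R (t'' + x) - R (t'' - x)) / 2) ((R (t'' + x) + R (t'' - x)) / 2)) t') t =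
    deriv R (t - x) * deriv R (t + x) *
      (deriv (fun s' => deriv (fun s'' => U s'' ((R (t + x) + R (t - x)) / 2)) s')
          ((R (t + x) - R (t - x)) / 2) -
       deriv (fun τ' => deriv (fun τ'' => U ((R (t + x) - R (t - x)) / 2) τ'') τ')
          ((R (t + x) + R (t - x)) / 2)) := by
  set F : ℝ × ℝ → ℝ := fun p => U p.1 p.2 with hFdef
  have hR1 : Differentiable ℝ R := hR.differentiable (by norm_num)
  have hR2 : Differentiable ℝ (deriv R) := by
    have h := (contDiff_succ_iff_deriv.mp (by exact_mod_cast hR : ContDiff ℝ ((1 : ℕ) + 1) R)).2.2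
    exact h.differentiable (by norm_num)
  -- basic HasDerivAt facts
  have hplus : ∀ (c y : ℝ), HasDerivAt (fun z => R (c + z)) (deriv R (c + y)) y := by
    intro c y
    simpa [Function.comp_def] using (HasDerivAt.comp y (hR1 (c + y)).hasDerivAt ((hasDerivAt_id y).const_add c))
  have hminus : ∀ (c y : ℝ), HasDerivAt (fun z => R (c - z)) (-deriv R (c - y)) y := by
    intro c y
    simpa [Function.comp_def] using (HasDerivAt.comp y (hR1 (c - y)).hasDerivAt ((hasDerivAt_id y).const_sub c))
  have hplus' : ∀ (c y : ℝ), HasDerivAt (fun z => deriv R (c + z)) (deriv (deriv R) (c + y)) y := by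
    intro c y
    simpa [Function.comp_def] using (HasDerivAt.comp y (hR2 (c + y)).hasDerivAt ((hasDerivAt_id y).const_add c))
  have hminus' : ∀ (c y : ℝ), HasDerivAt (fun z => deriv R (c - z)) (-(deriv (deriv R) (c - y))) y := by
    intro c y
    simpa [Function.comp_def] using (HasDerivAt.comp y (hR2 (c - y)).hasDerivAt ((hasDerivAt_id y).const_sub c))
  -- mirrored versions: R (z + c), R (z - c)
  have hplusR : ∀ (c y : ℝ), HasDerivAt (fun z => R (z + c)) (deriv R (y + c)) y := by
    intro c y
    simpa [Function.comp_def] using (HasDerivAt.comp y (hR1 (y + c)).hasDerivAt ((hasDerivAt_id y).add_const c))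
  have hminusR : ∀ (c y : ℝ), HasDerivAt (fun z => R (z - c)) (deriv R (y - c)) y := by
    intro c y
    simpa [Function.comp_def] using (HasDerivAt.comp y (hR1 (y - c)).hasDerivAt ((hasDerivAt_id y).sub_const c))
  have hplusR' : ∀ (c y : ℝ), HasDerivAt (fun z => deriv R (z + c)) (deriv (deriv R) (y + c)) y := by
    intro c y
    simpa [Function.comp_def] using (HasDerivAt.comp y (hR2 (y + c)).hasDerivAt ((hasDerivAt_id y).add_const c))
  have hminusR' : ∀ (c y : ℝ), HasDerivAt (fun z => deriv R (z - c)) (deriv (deriv R) (y - c)) y := by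
    intro c y
    simpa [Function.comp_def] using (HasDerivAt.comp y (hR2 (y - c)).hasDerivAt ((hasDerivAt_id y).sub_const c))
  -- coordinate maps
  set γ₁ : ℝ → ℝ × ℝ := fun y => ((R (t + y) - R (t - y)) / 2, (R (t + y) + R (t - y)) / 2)
  set γ₁' : ℝ → ℝ × ℝ := fun y =>
    ((deriv R (t + y) + deriv R (t - y)) / 2, (deriv R (t + y) - deriv R (t - y)) / 2)
  have hγ₁ : ∀ y, HasDerivAt γ₁ (γ₁' y) y := by
    intro y
    have h := (((hplus t y).sub (hminus t y)).div_const 2).prodMk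
      (((hplus t y).add (hminus t y)).div_const 2)
    convert h using 1
    rfl
    simp only [γ₁', Prod.ext_iff]
    constructor <;> ring
  have hγ₁' : HasDerivAt γ₁'
      ((deriv (deriv R) (t + x) - deriv (deriv R) (t - x)) / 2,
       (deriv (deriv R) (t + x) + deriv (deriv R) (t - x)) / 2) x := by
    have h := (((hplus' t x).add (hminus' t x)).div_const 2).prodMk
      (((hplus' t x).sub (hminus' t x)).div_const 2)
    convert h using 1
    rfl
    simp only [Prod.ext_iff]
    constructor <;> ring
  set γ₂ : ℝ → ℝ × ℝ := fun y => ((R (y + x) - R (y - x)) / 2, (R (y + x) + R (y - x)) / 2)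
  set γ₂' : ℝ → ℝ × ℝ := fun y =>
    ((deriv R (y + x) - deriv R (y - x)) / 2, (deriv R (y + x) + deriv R (y - x)) / 2)
  have hγ₂ : ∀ y, HasDerivAt γ₂ (γ₂' y) y := by
    intro y
    have h := (((hplusR x y).sub (hminusR x y)).div_const 2).prodMk
      (((hplusR x y).add (hminusR x y)).div_const 2)
    convert h using 1
    rfl
  have hγ₂' : HasDerivAt γ₂'
      ((deriv (deriv R) (t + x) - deriv (deriv R) (t - x)) / 2,
       (deriv (deriv R) (t + x) + deriv (deriv R) (t - x)) / 2) t := by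
    have h := (((hplusR' x t).sub (hminusR' x t)).div_const 2).prodMk
      (((hplusR' x t).add (hminusR' x t)).div_const 2)
    convert h using 2
    rfl
  -- the base point
  set p : ℝ × ℝ := ((R (t + x) - R (t - x)) / 2, (R (t + x) + R (t - x)) / 2) with hp
  set H := fderiv ℝ (fderiv ℝ F) p with hH
  -- the four second derivatives
  have hxx := key_comp F hU γ₁ γ₁' x _ hγ₁ hγ₁'
  have htt := key_comp F hU γ₂ γ₂' t _ hγ₂ hγ₂'
  have hss := key_comp F hU (fun s => (s, (R (t + x) + R (t - x)) / 2)) (fun _ => (1, 0))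
      ((R (t + x) - R (t - x)) / 2) 0
      (fun y => (hasDerivAt_id y).prodMk (hasDerivAt_const y _)) (hasDerivAt_const _ _)
  have hττ := key_comp F hU (fun τ => ((R (t + x) - R (t - x)) / 2, τ)) (fun _ => (0, 1))
      ((R (t + x) + R (t - x)) / 2) 0
      (fun y => (hasDerivAt_const y _).prodMk (hasDerivAt_id y)) (hasDerivAt_const _ _)
  set q : ℝ × ℝ := ((deriv (deriv R) (t + x) - deriv (deriv R) (t - x)) / 2,
      (deriv (deriv R) (t + x) + deriv (deriv R) (t - x)) / 2) with hq
  have hxx' : deriv (fun y => deriv (fun z => F (γ₁ z)) y) x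
      = H (γ₁' x) (γ₁' x) + fderiv ℝ F p q := hxx
  have htt' : deriv (fun y => deriv (fun z => F (γ₂ z)) y) t
      = H (γ₂' t) (γ₂' t) + fderiv ℝ F p q := htt
  have hss' : deriv (fun y => deriv (fun z => F (z, (R (t + x) + R (t - x)) / 2)) y)
        ((R (t + x) - R (t - x)) / 2)
      = H (1, 0) (1, 0) + fderiv ℝ F p 0 := hss
  have hττ' : deriv (fun y => deriv (fun z => F ((R (t + x) - R (t - x)) / 2, z)) y)
        ((R (t + x) + R (t - x)) / 2)
      = H (0, 1) (0, 1) + fderiv ℝ F p 0 := hττ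
  show deriv (fun y => deriv (fun z => F (γ₁ z)) y) x
      - deriv (fun y => deriv (fun z => F (γ₂ z)) y) t
    = deriv R (t - x) * deriv R (t + x) *
      (deriv (fun y => deriv (fun z => F (z, (R (t + x) + R (t - x)) / 2)) y)
          ((R (t + x) - R (t - x)) / 2)
       - deriv (fun y => deriv (fun z => F ((R (t + x) - R (t - x)) / 2, z)) y)
          ((R (t + x) + R (t - x)) / 2))
  rw [hxx', htt', hss', hττ']
  have ha : γ₁' x = ((deriv R (t + x) + deriv R (t - x)) / 2,
      (deriv R (t + x) - deriv R (t - x)) / 2) := rfl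
  have hb : γ₂' t = ((deriv R (t + x) - deriv R (t - x)) / 2,
      (deriv R (t + x) + deriv R (t - x)) / 2) := rfl
  rw [ha, hb,
    bilin_expand H ((deriv R (t + x) + deriv R (t - x)) / 2)
      ((deriv R (t + x) - deriv R (t - x)) / 2),
    bilin_expand H ((deriv R (t + x) - deriv R (t - x)) / 2)
      ((deriv R (t + x) + deriv R (t - x)) / 2)]
  ring
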